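/- For any ring R and A ∈ M_n(R), the matrix n·A·A* − tr(A·A*)·I has trace zero and all of its entries lie in the additive subgroup [R,R] of R generated by all commutators uv − vu. -/

import Mathlib

open Matrix Polynomial

/-- The symmetric determinant of a square matrix over a possibly noncommutative ring:
`sdet A = Σ_{α,β ∈ S_n} sgn α · sgn β · a_{α 1, β 1} ⋯ a_{α n, β n}` (ordered product). -/
def sdet {R : Type*} [Ring R] {n : ℕ} (A : Matrix (Fin n) (Fin n) R) : R :=
  ∑ α : Equiv.Perm (Fin n), ∑ β : Equiv.Perm (Fin n),
    ((Equiv.Perm.sign α : ℤ) * (Equiv.Perm.sign β : ℤ)) •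
      (List.ofFn fun i : Fin n => A (α i) (β i)).prod

/-- The preadjoint matrix `A*`: its `(r,s)` entry is the sum over `α, β ∈ S_n`
with `α s = s` and `β s = r` of `sgn α · sgn β` times the ordered product of the
entries `a_{α i, β i}` for `i ≠ s`. -/
def preadj {R : Type*} [Ring R] {n : ℕ} (A : Matrix (Fin n) (Fin n) R) :
    Matrix (Fin n) (Fin n) R :=
  fun r s =>
    ∑ α ∈ Finset.univ.filter (fun α : Equiv.Perm (Fin n) => α s = s),
      ∑ β ∈ Finset.univ.filter (fun β : Equiv.Perm (Fin n) => β s = r),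
        ((Equiv.Perm.sign α : ℤ) * (Equiv.Perm.sign β : ℤ)) •
          (((List.finRange n).filter (fun i => i ≠ s)).map fun i => A (α i) (β i)).prod

set_option linter.unreachableTactic false
set_option linter.unusedTactic false

section Aux
variable {R : Type*} [Ring R] {n : ℕ}



abbrev commSG (R : Type*) [Ring R] : AddSubgroup R :=
  AddSubgroup.closure {x : R | ∃ u v : R, x = u * v - v * u}

def Tq (R : Type*) [Ring R] : R →+ R ⧸ commSG R := QuotientAddGroup.mk' _

lemma Tq_mul_comm (x y : R) : Tq R (x * y) = Tq R (y * x) := by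
  have h : x * y - y * x ∈ commSG R := AddSubgroup.subset_closure ⟨x, y, rfl⟩
  have := (QuotientAddGroup.eq_iff_sub_mem (N := commSG R)).2 h
  exact this

lemma mem_of_Tq_eq {x y : R} (h : Tq R x = Tq R y) : x - y ∈ commSG R :=
  (QuotientAddGroup.eq_iff_sub_mem).1 h

lemma mem_of_Tq_zero {x : R} (h : Tq R x = 0) : x ∈ commSG R :=
  (QuotientAddGroup.eq_zero_iff x).1 h

lemma perm_apply_inv_self' {m : ℕ} (α : Equiv.Perm (Fin m)) (i : Fin m) : α (α⁻¹ i) = i :=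
  Equiv.apply_symm_apply α i

lemma Tq_prod_rotate (l : List R) (k : ℕ) : Tq R ((l.rotate k).prod) = Tq R l.prod := by
  rcases eq_or_ne l [] with rfl | hl
  · simp
  · have hlen : 0 < l.length := List.length_pos_iff.2 hl
    rw [← List.rotate_mod, List.rotate_eq_drop_append_take (Nat.mod_lt _ hlen).le]
    conv_rhs => rw [← List.take_append_drop (k % l.length) l]
    rw [List.prod_append, List.prod_append]
    exact Tq_mul_comm _ _


def Lst (j : Fin n) : List (Fin n) := j :: (List.finRange n).erase j

lemma nodup_Lst (j : Fin n) : (Lst j).Nodup :=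
  List.nodup_cons.2 ⟨(List.nodup_finRange n).not_mem_erase, (List.nodup_finRange n).erase j⟩

lemma length_Lst (j : Fin n) : (Lst j).length = n := by
  have h : j ∈ List.finRange n := List.mem_finRange j
  have := List.length_erase_add_one h
  simp only [Lst, List.length_cons, List.length_finRange] at *
  omega

lemma mem_Lst (j l : Fin n) : l ∈ Lst j := by
  rcases eq_or_ne l j with rfl | h
  · exact List.mem_cons_self
  · exact List.mem_cons_of_mem _ (((List.nodup_finRange n).mem_erase_iff).2 ⟨h, List.mem_finRange l⟩)

lemma filter_ne_eq_erase (j : Fin n) :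
    (List.finRange n).filter (fun i => i ≠ j) = (List.finRange n).erase j := by
  rw [(List.nodup_finRange n).erase_eq_filter j]
  exact List.filter_congr (fun a _ => by by_cases h : a = j <;> simp [h])

noncomputable def eL (j : Fin n) : Fin n ≃ Fin n :=
  Equiv.ofBijective (fun t => (Lst j).get (Fin.cast (length_Lst j).symm t))
    (by
      have hinj : Function.Injective (fun t : Fin n => (Lst j).get (Fin.cast (length_Lst j).symm t)) := by
        intro a b hab
        have h2 := (List.nodup_iff_injective_get.1 (nodup_Lst j)) hab
        exact Fin.ext (congrArg Fin.val h2 :)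
      exact Finite.injective_iff_bijective.1 hinj)

lemma eL_apply (j : Fin n) (t : Fin n) :
    eL j t = (Lst j).get (Fin.cast (length_Lst j).symm t) := rfl

lemma list_get_map' {α β : Type*} (f : α → β) {l : List α} {m : Fin (l.map f).length} :
    (l.map f).get m = f (l.get ⟨m, List.length_map f ▸ m.2⟩) := by
  simp

lemma map_eL_rotate (i j : Fin n) (k : Fin n) :
    (Lst j).map (fun l => eL i ((eL j).symm l + k)) = (Lst i).rotate k.val := by
  apply List.ext_get
  · simp [length_Lst]
  · intro t h1 h2
    have h1' : t < (Lst j).length := by simpa using h1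
    have htn : t < n := by simpa [length_Lst] using h1'
    rw [list_get_map', List.get_rotate]
    have hg : (Lst j).get ⟨t, h1'⟩ = eL j (⟨t, htn⟩ : Fin n) := rfl
    show eL i ((eL j).symm ((Lst j).get ⟨t, h1'⟩) + k) = _
    rw [hg, Equiv.symm_apply_apply, eL_apply]
    congr 1
    simp [Fin.add_def, length_Lst]


variable (A : Matrix (Fin n) (Fin n) R)

def wd (i j : Fin n) (α β : Equiv.Perm (Fin n)) : List R :=
  (Lst j).map (fun l => if l = j then A i (β l) else A (α l) (β l))

def trm (i j : Fin n) (p : Equiv.Perm (Fin n) × Equiv.Perm (Fin n)) : R ⧸ commSG R :=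
  ((Equiv.Perm.sign p.1 : ℤ) * (Equiv.Perm.sign p.2 : ℤ)) • Tq R (wd A i j p.1 p.2).prod

lemma word_eq (i j : Fin n) (α β : Equiv.Perm (Fin n)) :
    A i (β j) * (((List.finRange n).filter (fun l => l ≠ j)).map (fun l => A (α l) (β l))).prod
      = (wd A i j α β).prod := by
  rw [filter_ne_eq_erase]
  show _ = (List.map _ (j :: (List.finRange n).erase j)).prod
  rw [List.map_cons, List.prod_cons, if_pos rfl]
  have hmap : List.map (fun l => if l = j then A i (β l) else A (α l) (β l))
      ((List.finRange n).erase j) =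
      List.map (fun l => A (α l) (β l)) ((List.finRange n).erase j) :=
    List.map_congr_left fun l hl => by
      have h : l ≠ j := ((List.nodup_finRange n).mem_erase_iff.1 hl).1
      rw [if_neg h]
  rw [hmap]

lemma TB (i j : Fin n) :
    Tq R ((A * preadj A) i j) =
    ∑ p ∈ (Finset.univ.filter fun α : Equiv.Perm (Fin n) => α j = j) ×ˢ
        (Finset.univ : Finset (Equiv.Perm (Fin n))), trm A i j p := by
  have h1 : (A * preadj A) i j
      = ∑ α ∈ Finset.univ.filter (fun α : Equiv.Perm (Fin n) => α j = j),
          ∑ β : Equiv.Perm (Fin n),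
          ((Equiv.Perm.sign α : ℤ) * (Equiv.Perm.sign β : ℤ)) • (wd A i j α β).prod := by
    rw [Matrix.mul_apply]
    simp only [preadj, Finset.mul_sum, mul_smul_comm]
    rw [Finset.sum_comm]
    refine Finset.sum_congr rfl fun α hα => ?_
    have h2 : ∀ k : Fin n, ∀ β ∈ Finset.univ.filter (fun β : Equiv.Perm (Fin n) => β j = k),
        ((Equiv.Perm.sign α : ℤ) * (Equiv.Perm.sign β : ℤ)) •
          (A i k * (((List.finRange n).filter (fun l => l ≠ j)).map
            (fun l => A (α l) (β l))).prod)
        = ((Equiv.Perm.sign α : ℤ) * (Equiv.Perm.sign β : ℤ)) • (wd A i j α β).prod := by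
      intro k β hβ
      have hk : β j = k := (Finset.mem_filter.1 hβ).2
      rw [← hk, word_eq]
    calc ∑ k : Fin n, ∑ β ∈ Finset.univ.filter (fun β : Equiv.Perm (Fin n) => β j = k),
          ((Equiv.Perm.sign α : ℤ) * (Equiv.Perm.sign β : ℤ)) •
            (A i k * (((List.finRange n).filter (fun l => l ≠ j)).map
              (fun l => A (α l) (β l))).prod)
        = ∑ k : Fin n, ∑ β ∈ Finset.univ.filter (fun β : Equiv.Perm (Fin n) => β j = k),
            ((Equiv.Perm.sign α : ℤ) * (Equiv.Perm.sign β : ℤ)) • (wd A i j α β).prod :=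
          Finset.sum_congr rfl fun k _ => Finset.sum_congr rfl (h2 k)
      _ = ∑ β : Equiv.Perm (Fin n),
            ((Equiv.Perm.sign α : ℤ) * (Equiv.Perm.sign β : ℤ)) • (wd A i j α β).prod :=
          Finset.sum_fiberwise_of_maps_to (fun β _ => Finset.mem_univ (β j)) _
  rw [h1, map_sum, Finset.sum_product]
  refine Finset.sum_congr rfl fun α _ => ?_
  rw [map_sum]
  exact Finset.sum_congr rfl fun β _ => (map_zsmul _ _ _)


section Bij
variable {R : Type*} [Ring R] {n : ℕ} [NeZero n]

noncomputable def rgen (i j : Fin n) (k : Fin n) : Equiv.Perm (Fin n) :=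
  ((eL j).symm.trans (Equiv.addRight k)).trans (eL i)

lemma rgen_apply (i j k l : Fin n) : rgen i j k l = eL i ((eL j).symm l + k) := rfl

lemma rgen_inv (i j k : Fin n) : (rgen i j k)⁻¹ = rgen j i (-k) := by
  refine inv_eq_of_mul_eq_one_right (Equiv.ext fun l => ?_)
  rw [Equiv.Perm.mul_apply, rgen_apply, rgen_apply, Equiv.symm_apply_apply,
    neg_add_cancel_right, Equiv.apply_symm_apply, Equiv.Perm.one_apply]

lemma rgen_spec (i j m : Fin n) : rgen i j ((eL i).symm m - (eL j).symm j) j = m := by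
  rw [rgen_apply, add_comm, sub_add_cancel, Equiv.apply_symm_apply]

lemma Tq_map_rgen (g : Fin n → R) (i j k : Fin n) :
    Tq R (((Lst j).map (fun l => g (rgen i j k l))).prod) = Tq R (((Lst i).map g).prod) := by
  have h3 : (Lst j).map (fun l => g (rgen i j k l))
      = ((Lst j).map (fun l => eL i ((eL j).symm l + k))).map g := by
    rw [List.map_map]; rfl
  rw [h3, map_eL_rotate i j k, List.map_rotate, Tq_prod_rotate]

variable (A : Matrix (Fin n) (Fin n) R)

noncomputable def invoP (i j : Fin n) (p : Equiv.Perm (Fin n) × Equiv.Perm (Fin n)) :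
    Equiv.Perm (Fin n) × Equiv.Perm (Fin n) :=
  (p.1 * Equiv.swap j (p.1⁻¹ i) * rgen j j ((eL j).symm (p.1⁻¹ i) - (eL j).symm j),
   p.2 * rgen j j ((eL j).symm (p.1⁻¹ i) - (eL j).symm j))

lemma invoP_invoP (i j : Fin n) (p : Equiv.Perm (Fin n) × Equiv.Perm (Fin n)) :
    invoP i j (invoP i j p) = p := by
  obtain ⟨α, β⟩ := p
  simp only [invoP, Prod.mk.injEq]
  set m := α⁻¹ i with hm
  set k := (eL j).symm m - (eL j).symm j with hk
  have hρj : rgen j j k j = m := rgen_spec j j m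
  have hm' : (α * Equiv.swap j m * rgen j j k)⁻¹ i = (rgen j j k)⁻¹ j := by
    simp [_root_.mul_inv_rev, Equiv.Perm.mul_apply, Equiv.swap_inv, ← hm, Equiv.swap_apply_right]
  have h2 : (rgen j j k)⁻¹ j = eL j ((eL j).symm j + -k) := by rw [rgen_inv, rgen_apply]
  have hk' : (eL j).symm ((α * Equiv.swap j m * rgen j j k)⁻¹ i) - (eL j).symm j = -k := by
    rw [hm', h2, Equiv.symm_apply_apply, add_sub_cancel_left]
  have hconj : rgen j j k * Equiv.swap j ((rgen j j k)⁻¹ j) * (rgen j j k)⁻¹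
      = Equiv.swap m j := by
    rw [Equiv.mul_swap_eq_swap_mul, mul_inv_cancel_right, perm_apply_inv_self', hρj]
  constructor
  · rw [hk', ← rgen_inv, hm']
    calc α * Equiv.swap j m * rgen j j k * Equiv.swap j ((rgen j j k)⁻¹ j) * (rgen j j k)⁻¹
        = α * Equiv.swap j m *
            (rgen j j k * Equiv.swap j ((rgen j j k)⁻¹ j) * (rgen j j k)⁻¹) := by
          group
      _ = α * Equiv.swap j m * Equiv.swap m j := by rw [hconj]
      _ = α := by rw [Equiv.swap_comm m j, Equiv.mul_swap_mul_self]
  · rw [hk', ← rgen_inv, mul_inv_cancel_right]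

lemma invoP_mem (i j : Fin n) (p : Equiv.Perm (Fin n) × Equiv.Perm (Fin n)) (hp : p.1 j = j) :
    (invoP i j p).1 j = j := by
  obtain ⟨α, β⟩ := p
  simp only [invoP]
  rw [Equiv.Perm.mul_apply, Equiv.Perm.mul_apply, rgen_spec, Equiv.swap_apply_right]
  exact hp

lemma Tq_offdiag (i j : Fin n) (hij : i ≠ j) : Tq R ((A * preadj A) i j) = 0 := by
  rw [TB]
  refine Finset.sum_involution (fun p _ => invoP i j p) ?_ ?_ ?_ ?_
  · intro p hp
    obtain ⟨α, β⟩ := p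
    rw [Finset.mem_product, Finset.mem_filter] at hp
    have hpj : α j = j := hp.1.2
    set m := α⁻¹ i with hm
    set k := (eL j).symm m - (eL j).symm j with hk
    set ρ := rgen j j k with hρ
    have hρj : ρ j = m := rgen_spec j j m
    have hαm : α m = i := perm_apply_inv_self' α i
    have hmj : m ≠ j := fun h => hij (by rw [← hαm, h, hpj])
    have hw : wd A i j (α * Equiv.swap j m * ρ) (β * ρ)
        = (Lst j).map (fun l =>
            (fun x => if x = j then A i (β x) else A (α x) (β x)) (rgen j j k l)) := by
      refine List.map_congr_left fun l _ => ?_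
      show (if l = j then A i (β (ρ l)) else A (α (Equiv.swap j m (ρ l))) (β (ρ l)))
          = if ρ l = j then A i (β (ρ l)) else A (α (ρ l)) (β (ρ l))
      by_cases hl : l = j
      · subst hl
        rw [if_pos rfl, hρj, if_neg hmj, hαm]
      · rw [if_neg hl]
        have hρlm : ρ l ≠ m := fun h => hl (ρ.injective (h.trans hρj.symm))
        by_cases h2 : ρ l = j
        · rw [if_pos h2, h2, Equiv.swap_apply_left, hαm]
        · rw [if_neg h2, Equiv.swap_apply_of_ne_of_ne h2 hρlm]
    have hTq : Tq R (wd A i j (α * Equiv.swap j m * ρ) (β * ρ)).prod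
        = Tq R (wd A i j α β).prod := by
      rw [hw]
      exact Tq_map_rgen (fun x => if x = j then A i (β x) else A (α x) (β x)) j j k
    show trm A i j (α, β) + trm A i j (invoP i j (α, β)) = 0
    simp only [invoP, trm, ← hm, ← hk, ← hρ]
    rw [hTq]
    have hcoef : ((Equiv.Perm.sign (α * Equiv.swap j m * ρ) : ℤ)
            * (Equiv.Perm.sign (β * ρ) : ℤ))
        = -((Equiv.Perm.sign α : ℤ) * (Equiv.Perm.sign β : ℤ)) := by
      rcases Int.units_eq_one_or (Equiv.Perm.sign ρ) with h | h <;>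
        simp [Equiv.Perm.sign_mul, Equiv.Perm.sign_swap (Ne.symm hmj), h] <;> ring
    rw [hcoef, neg_smul, add_neg_cancel]
  · intro p hp _ heq
    obtain ⟨α, β⟩ := p
    rw [Finset.mem_product, Finset.mem_filter] at hp
    have h2 : β * rgen j j ((eL j).symm (α⁻¹ i) - (eL j).symm j) = β :=
      congrArg Prod.snd heq
    have hρ1 : rgen j j ((eL j).symm (α⁻¹ i) - (eL j).symm j) = 1 :=
      mul_left_cancel (h2.trans (mul_one β).symm)
    have : α⁻¹ i = j := by
      have := rgen_spec j j (α⁻¹ i)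
      rw [hρ1, Equiv.Perm.one_apply] at this
      exact this.symm
    exact hij (by rw [← perm_apply_inv_self' α i, this, hp.1.2])
  · intro p hp
    rw [Finset.mem_product, Finset.mem_filter] at hp
    rw [Finset.mem_product, Finset.mem_filter]
    exact ⟨⟨Finset.mem_univ _, invoP_mem i j p hp.1.2⟩, Finset.mem_univ _⟩
  · intro p hp
    exact invoP_invoP i j p

noncomputable def bijP (i j : Fin n) (p : Equiv.Perm (Fin n) × Equiv.Perm (Fin n)) :
    Equiv.Perm (Fin n) × Equiv.Perm (Fin n) :=
  (p.1 * rgen i j ((eL i).symm (p.1⁻¹ j) - (eL j).symm j),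
   p.2 * rgen i j ((eL i).symm (p.1⁻¹ j) - (eL j).symm j))

lemma bijP_fst (i j : Fin n) (p : Equiv.Perm (Fin n) × Equiv.Perm (Fin n)) :
    (bijP i j p).1 j = j := by
  obtain ⟨α, β⟩ := p
  simp only [bijP]
  rw [Equiv.Perm.mul_apply, rgen_spec, perm_apply_inv_self']

lemma bijP_bijP (i j : Fin n) (p : Equiv.Perm (Fin n) × Equiv.Perm (Fin n))
    (hp : p.1 i = i) : bijP j i (bijP i j p) = p := by
  obtain ⟨α, β⟩ := p
  simp only [bijP, Prod.mk.injEq]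
  set k := (eL i).symm (α⁻¹ j) - (eL j).symm j with hk
  have hαinv : α⁻¹ i = i := (Equiv.Perm.inv_eq_iff_eq).2 hp.symm
  have hm' : (α * rgen i j k)⁻¹ i = (rgen i j k)⁻¹ i := by
    simp [_root_.mul_inv_rev, Equiv.Perm.mul_apply, hαinv]
  have h2 : (rgen i j k)⁻¹ i = eL j ((eL i).symm i + -k) := by rw [rgen_inv, rgen_apply]
  have hk' : (eL j).symm ((α * rgen i j k)⁻¹ i) - (eL i).symm i = -k := by
    rw [hm', h2, Equiv.symm_apply_apply, add_sub_cancel_left]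
  constructor
  · rw [hk', ← rgen_inv, mul_inv_cancel_right]
  · rw [hk', ← rgen_inv, mul_inv_cancel_right]

lemma Tq_diag_eq (i j : Fin n) :
    Tq R ((A * preadj A) i i) = Tq R ((A * preadj A) j j) := by
  rw [TB, TB]
  refine Finset.sum_nbij' (bijP i j) (bijP j i) ?_ ?_ ?_ ?_ ?_
  · intro p hp
    rw [Finset.mem_product, Finset.mem_filter]
    exact ⟨⟨Finset.mem_univ _, bijP_fst i j p⟩, Finset.mem_univ _⟩
  · intro p hp
    rw [Finset.mem_product, Finset.mem_filter]
    exact ⟨⟨Finset.mem_univ _, bijP_fst j i p⟩, Finset.mem_univ _⟩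
  · intro p hp
    rw [Finset.mem_product, Finset.mem_filter] at hp
    exact bijP_bijP i j p hp.1.2
  · intro p hp
    rw [Finset.mem_product, Finset.mem_filter] at hp
    exact bijP_bijP j i p hp.1.2
  · intro p hp
    obtain ⟨α, β⟩ := p
    rw [Finset.mem_product, Finset.mem_filter] at hp
    have hpi : α i = i := hp.1.2
    set k := (eL i).symm (α⁻¹ j) - (eL j).symm j with hk
    set ρ := rgen i j k with hρ
    have hρj : ρ j = α⁻¹ j := rgen_spec i j (α⁻¹ j)
    have hw1 : wd A i i α β = (Lst i).map (fun x => A (α x) (β x)) := by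
      refine List.map_congr_left fun l _ => ?_
      by_cases hl : l = i
      · subst hl; rw [if_pos rfl, hpi]
      · rw [if_neg hl]
    have hw2 : wd A j j (α * ρ) (β * ρ)
        = (Lst j).map (fun l => (fun x => A (α x) (β x)) (rgen i j k l)) := by
      refine List.map_congr_left fun l _ => ?_
      show (if l = j then A j (β (ρ l)) else A (α (ρ l)) (β (ρ l))) = A (α (ρ l)) (β (ρ l))
      by_cases hl : l = j
      · subst hl; rw [if_pos rfl, hρj, perm_apply_inv_self']
      · rw [if_neg hl]
    have hTq : Tq R (wd A j j (α * ρ) (β * ρ)).prod = Tq R (wd A i i α β).prod := by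
      rw [hw2, hw1]
      exact Tq_map_rgen (fun x => A (α x) (β x)) i j k
    show trm A i i (α, β) = trm A j j (bijP i j (α, β))
    simp only [bijP, trm, ← hk, ← hρ]
    rw [hTq]
    have hcoef : ((Equiv.Perm.sign α : ℤ) * (Equiv.Perm.sign β : ℤ))
        = ((Equiv.Perm.sign (α * ρ) : ℤ) * (Equiv.Perm.sign (β * ρ) : ℤ)) := by
      rcases Int.units_eq_one_or (Equiv.Perm.sign ρ) with h | h <;>
        simp [Equiv.Perm.sign_mul, h] <;> ring
    rw [hcoef]

end Bij
end Aux

theorem mul_preadj_trace_zero_and_commutator {R : Type*} [Ring R] {n : ℕ}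
    (A : Matrix (Fin n) (Fin n) R) :
    Matrix.trace (n • (A * preadj A) - Matrix.scalar (Fin n) (Matrix.trace (A * preadj A))) = 0 ∧
    ∀ i j, (n • (A * preadj A) - Matrix.scalar (Fin n) (Matrix.trace (A * preadj A))) i j ∈
      AddSubgroup.closure {x : R | ∃ u v : R, x = u * v - v * u} := by
  constructor
  · rw [Matrix.trace_sub, Matrix.trace_smul]
    have h1 : Matrix.trace ((Matrix.scalar (Fin n)) (Matrix.trace (A * preadj A)))
        = n • Matrix.trace (A * preadj A) := by
      rw [Matrix.scalar_apply, Matrix.trace_diagonal]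
      simp
    rw [h1, sub_self]
  · intro i j
    haveI : NeZero n := ⟨j.pos.ne'⟩
    rw [Matrix.sub_apply, Matrix.smul_apply]
    by_cases hij : i = j
    · subst hij
      have hscal : (Matrix.scalar (Fin n) (Matrix.trace (A * preadj A))) i i
          = Matrix.trace (A * preadj A) := by
        rw [Matrix.scalar_apply, Matrix.diagonal_apply_eq]
      rw [hscal]
      have hsum : (n • (A * preadj A) i i : R) - Matrix.trace (A * preadj A)
          = ∑ l : Fin n, ((A * preadj A) i i - (A * preadj A) l l) := by
        rw [Finset.sum_sub_distrib, Finset.sum_const, Finset.card_univ, Fintype.card_fin]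
        rfl
      rw [hsum]
      exact AddSubgroup.sum_mem _ (fun l _ => mem_of_Tq_eq (Tq_diag_eq A i l))
    · have hscal : (Matrix.scalar (Fin n) (Matrix.trace (A * preadj A))) i j = 0 := by
        rw [Matrix.scalar_apply, Matrix.diagonal_apply_ne _ hij]
      rw [hscal, sub_zero]
      exact AddSubgroup.nsmul_mem _ (mem_of_Tq_zero (Tq_offdiag A i j hij)) n
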